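/- Suppose H ≅ C_p (p an odd prime) acts simplicially on a finite simplicial complex K satisfying complementarity on vertex set V, and suppose every connected component of the fixed point complex K^H is a pseudomanifold (in particular, not a simplex of positive dimension). Then K^H has at most 3 connected components. -/

import Mathlib

/-- A finite simplicial complex (given as a predicate on vertex sets) is a
`d`-pseudomanifold if every simplex is contained in a `d`-simplex, every
`(d-1)`-simplex lies in exactly two `d`-simplices, and it is strongly connected. -/
def IsPseudomanifold {W : Type*} (L : Set W → Prop) (d : ℕ) : Prop :=
  (∀ σ, L σ → ∃ τ, L τ ∧ σ ⊆ τ ∧ τ.ncard = d + 1) ∧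
  (∀ σ, L σ → σ.ncard = d → {τ : Set W | L τ ∧ τ.ncard = d + 1 ∧ σ ⊆ τ}.ncard = 2) ∧
  (∀ σ τ : Set W, L σ → L τ → σ.ncard = d + 1 → τ.ncard = d + 1 →
    Relation.ReflTransGen
      (fun a b => L a ∧ L b ∧ a.ncard = d + 1 ∧ b.ncard = d + 1 ∧ (a ∩ b).ncard = d) σ τ)

/-- Suppose `H ≅ C_p` (`p` an odd prime) acts simplicially on a finite simplicial
complex `K` satisfying complementarity, and every connected component of the fixed
point complex `K^H` is a pseudomanifold.  Then `K^H` has at most `3` connected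
components.  Here the vertices of `K^H` are the `H`-orbits that are simplices of `K`,
two vertices being adjacent when the union of the corresponding orbits is a simplex
of `K`. -/
theorem fixedPointComplex_components_le_three {V : Type*} [Fintype V]
    (K : Set V → Prop) (hdown : ∀ σ τ : Set V, τ ⊆ σ → K σ → K τ)
    (hcomp : ∀ σ : Set V, K σ ↔ ¬ K σᶜ)
    {p : ℕ} (hp : p.Prime) (hodd : Odd p)
    (H : Type*) [Group H] [IsCyclic H] (hH : Nat.card H = p)
    [MulAction H V] (hsimp : ∀ (h : H) (σ : Set V), K σ → K ((fun v => h • v) '' σ))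
    (hpseudo : ∀ a : {s : Set V // (∃ v : V, s = MulAction.orbit H v) ∧ K s},
      ∃ d : ℕ, IsPseudomanifold
        (fun S : Set {s : Set V // (∃ v : V, s = MulAction.orbit H v) ∧ K s} =>
          S ⊆ {b | Relation.EqvGen (fun x y => K ((x : Set V) ∪ (y : Set V))) a b} ∧
          K (⋃ x ∈ S, (x : Set V))) d) :
    Nat.card (Quot (fun x y : {s : Set V // (∃ v : V, s = MulAction.orbit H v) ∧ K s} =>
      K ((x : Set V) ∪ (y : Set V)))) ≤ 3 := by
  classical
  set A := {s : Set V // (∃ v : V, s = MulAction.orbit H v) ∧ K s} with hA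
  set R : A → A → Prop := fun x y => K ((x : Set V) ∪ (y : Set V)) with hRdef
  -- two orbits sharing a point are equal
  have horb : ∀ (x y : A) (v : V), v ∈ (x : Set V) → v ∈ (y : Set V) → x = y := by
    rintro ⟨x, ⟨vx, rfl⟩, hx⟩ ⟨y, ⟨vy, rfl⟩, hy⟩ v hvx hvy
    apply Subtype.ext
    have h1 : MulAction.orbit H v = MulAction.orbit H vx := MulAction.orbit_eq_iff.mpr hvx
    have h2 : MulAction.orbit H v = MulAction.orbit H vy := MulAction.orbit_eq_iff.mpr hvy
    simp only
    rw [← h1, ← h2]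
  by_contra hcard
  push_neg at hcard
  have hFinA : Finite A := by infer_instance
  have hFinQ : Finite (Quot R) := Finite.of_surjective (Quot.mk R) Quot.mk_surjective
  obtain ⟨n, ⟨e⟩⟩ := Finite.exists_equiv_fin (Quot R)
  have hn : Nat.card (Quot R) = n := Nat.card_eq_of_equiv_fin e
  have h4 : 4 ≤ n := by omega
  set q : Fin 4 → Quot R := fun i => e.symm (Fin.castLE h4 i) with hq
  have hqinj : Function.Injective q := by
    intro i j hij
    have := e.symm.injective hij
    exact Fin.castLE_injective h4 this
  choose a ha using fun i => Quot.exists_rep (q i)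
  set σ : Set V := {v : V | ∃ x : A, (Quot.mk R x = q 0 ∨ Quot.mk R x = q 1) ∧ v ∈ (x : Set V)}
    with hσdef
  have key : ∀ i j : Fin 4, i ≠ j → ¬ R (a i) (a j) := by
    intro i j hij hR
    exact hij (hqinj (by rw [← ha i, ← ha j]; exact Quot.sound hR))
  have hσ : ¬ K σ := by
    intro hKσ
    have hsub : (↑(a 0) : Set V) ∪ ↑(a 1) ⊆ σ := by
      rintro v (hv | hv)
      · exact ⟨a 0, Or.inl (ha 0), hv⟩
      · exact ⟨a 1, Or.inr (ha 1), hv⟩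
    exact key 0 1 (by decide) (hdown σ _ hsub hKσ)
  have hσc : ¬ K σᶜ := by
    intro hKσc
    have hdisj : ∀ i : Fin 4, i ≠ 0 → i ≠ 1 → (↑(a i) : Set V) ⊆ σᶜ := by
      intro i hi0 hi1 v hv hvσ
      obtain ⟨x, hx, hvx⟩ := hvσ
      have : x = a i := horb x (a i) v hvx hv
      rcases hx with hx | hx
      · exact hi0 (hqinj (by rw [← ha i, ← this, hx]))
      · exact hi1 (hqinj (by rw [← ha i, ← this, hx]))
    have hsub : (↑(a 2) : Set V) ∪ ↑(a 3) ⊆ σᶜ := by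
      rintro v (hv | hv)
      · exact hdisj 2 (by decide) (by decide) hv
      · exact hdisj 3 (by decide) (by decide) hv
    exact key 2 3 (by decide) (hdown σᶜ _ hsub hKσc)
  exact hσ ((hcomp σ).mpr hσc)
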